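/- arXiv:2311.05172 — 2 statements merged into one kernel-verified Lean document; each statement's English description precedes it below -/
import Mathlib

section
/- Let G be an abelian group, M ⊆ G a submonoid that is sharp and saturated in G, and α ∈ G an element such that neither α nor −α belongs to M. Then: (1) if γ ∈ M and n, m ∈ ℕ satisfy γ + n•α = m•α, then γ = 0 and n = m; (2) consequently, if a, b ∈ M + ℕα and a + b ∈ ℕα (i.e. a + b = m•α for some m ∈ ℕ), then a ∈ ℕα and b ∈ ℕα. -/
/-- Let `G` be an abelian group, `M ⊆ G` a submonoid that is sharp and saturated in `G`,
and `α ∈ G` such that neither `α` nor `-α` belongs to `M`.  Then: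
(1) if `γ ∈ M` and `γ + n•α = m•α` (for `n m : ℕ`) then `γ = 0` and `n = m`;
(2) consequently, if `a, b ∈ M + ℕα` and `a + b ∈ ℕα`, then `a ∈ ℕα` and `b ∈ ℕα`. -/
theorem saturated_sharp_ideal {G : Type*} [AddCommGroup G] (M : AddSubmonoid G)
    (hsharp : ∀ x ∈ M, -x ∈ M → x = 0)
    (hsat : ∀ (x : G) (n : ℕ), 0 < n → n • x ∈ M → x ∈ M)
    (α : G) (hα : α ∉ M) (hα' : -α ∉ M) :
    (∀ γ ∈ M, ∀ n m : ℕ, γ + n • α = m • α → γ = 0 ∧ n = m) ∧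
    (∀ a b : G,
      (∃ γ ∈ M, ∃ n : ℕ, a = γ + n • α) →
      (∃ γ ∈ M, ∃ n : ℕ, b = γ + n • α) →
      (∃ m : ℕ, a + b = m • α) →
      (∃ k : ℕ, a = k • α) ∧ (∃ k : ℕ, b = k • α)) := by
  have part1 : ∀ γ ∈ M, ∀ n m : ℕ, γ + n • α = m • α → γ = 0 ∧ n = m := by
    intro γ hγ n m h
    have hnm : n = m := by
      rcases lt_trichotomy n m with hlt | heq | hgt
      · exfalso
        apply hα
        apply hsat α (m - n) (by omega)
        have : γ = (m - n) • α := by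
          have h2 : (m - n) • α = m • α - n • α := by rw [sub_eq_add_neg]; exact sub_nsmul α hlt.le
          rw [h2, ← h]; abel
        rwa [← this]
      · exact heq
      · exfalso
        apply hα'
        apply hsat (-α) (n - m) (by omega)
        have : γ = (n - m) • (-α) := by
          have h2 : (n - m) • α = n • α - m • α := by rw [sub_eq_add_neg]; exact sub_nsmul α hgt.le
          rw [smul_neg, h2, ← h]; abel
        rwa [← this]
    refine ⟨?_, hnm⟩
    subst hnm
    have : γ = 0 := by
      have := h
      rwa [add_eq_right] at this
    exact this
  refine ⟨part1, ?_⟩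
  rintro a b ⟨γ₁, hγ₁, n₁, rfl⟩ ⟨γ₂, hγ₂, n₂, rfl⟩ ⟨m, hm⟩
  have hsum : (γ₁ + γ₂) + (n₁ + n₂) • α = m • α := by
    rw [add_smul]; rw [← hm]; abel
  obtain ⟨h0, -⟩ := part1 (γ₁ + γ₂) (M.add_mem hγ₁ hγ₂) (n₁ + n₂) m hsum
  have hγ₁0 : γ₁ = 0 := hsharp γ₁ hγ₁ (by rw [neg_eq_of_add_eq_zero_right h0]; exact hγ₂)
  have hγ₂0 : γ₂ = 0 := by rw [hγ₁0, zero_add] at h0; exact h0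
  exact ⟨⟨n₁, by rw [hγ₁0, zero_add]⟩, ⟨n₂, by rw [hγ₂0, zero_add]⟩⟩
end

section
/- Let R = ℤ[x,y]/(x², y²). Then the element xy is nonzero in R, but the two ring homomorphisms φ_U : R → ℤ[x,t]/(x²) determined by x ↦ x, y ↦ x·t, and φ_V : R → ℤ[y,s]/(y²) determined by x ↦ y·s, y ↦ y, are well defined (i.e. x² and y² map to 0 in each target) and both send xy to 0. -/
noncomputable section

open MvPolynomial

/-- The polynomial ring `ℤ[x,y]` (also used, with variables renamed, as `ℤ[x,t]` and
`ℤ[y,s]`), with `x = X 0`, `y = X 1` (resp. `x = X 0, t = X 1` and `y = X 0, s = X 1`). -/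
abbrev A2 : Type := MvPolynomial (Fin 2) ℤ

/-- The ideal `(x², y²)` of `ℤ[x,y]`, so that `R = ℤ[x,y]/(x², y²)`. -/
def IXY : Ideal A2 := Ideal.span {X 0 ^ 2, X 1 ^ 2}

/-- The ideal `(x²)` of `ℤ[x,t]` (the first chart of the blowup). -/
def JU : Ideal A2 := Ideal.span {X 0 ^ 2}

/-- The ideal `(y²)` of `ℤ[y,s]` (the second chart of the blowup). -/
def JV : Ideal A2 := Ideal.span {X 0 ^ 2}

/-- The ring homomorphism `ℤ[x,y] → ℤ[x,t]`, `x ↦ x`, `y ↦ x·t`. -/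
def phiU : A2 →+* A2 := (aeval ![X 0, X 0 * X 1]).toRingHom

/-- The ring homomorphism `ℤ[x,y] → ℤ[y,s]`, `x ↦ y·s`, `y ↦ y`. -/
def phiV : A2 →+* A2 := (aeval ![X 0 * X 1, X 0]).toRingHom

lemma key_xy_not_mem : (X 0 * X 1 : A2) ∉ IXY := by
  intro h
  rw [IXY, Ideal.mem_span_pair] at h
  obtain ⟨u, v, huv⟩ := h
  have := congrArg (coeff (Finsupp.single 0 1 + Finsupp.single 1 1)) huv
  rw [coeff_add, X_pow_eq_monomial, X_pow_eq_monomial, coeff_mul_monomial',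
    coeff_mul_monomial'] at this
  rw [if_neg, if_neg] at this
  · rw [X, X, monomial_mul, coeff_monomial, if_pos rfl] at this
    simp at this
  · intro hle
    have := hle (1 : Fin 2)
    simp [Finsupp.single_apply] at this
  · intro hle
    have := hle (0 : Fin 2)
    simp [Finsupp.single_apply] at this

/-- In `R = ℤ[x,y]/(x², y²)` the element `xy` is nonzero, but the two ring homomorphisms
`φ_U : R → ℤ[x,t]/(x²)` (`x ↦ x`, `y ↦ x·t`) and `φ_V : R → ℤ[y,s]/(y²)` (`x ↦ y·s`, `y ↦ y`)
are well defined (`x²` and `y²` map into the target ideals) and both send `xy` to `0`. -/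
theorem xy_nonzero_but_dies_on_blowup_charts :
    Ideal.Quotient.mk IXY (X 0 * X 1) ≠ 0 ∧
    (phiU (X 0 ^ 2) ∈ JU ∧ phiU (X 1 ^ 2) ∈ JU) ∧
    (phiV (X 0 ^ 2) ∈ JV ∧ phiV (X 1 ^ 2) ∈ JV) ∧
    phiU (X 0 * X 1) ∈ JU ∧ phiV (X 0 * X 1) ∈ JV := by
  refine ⟨?_, ⟨?_, ?_⟩, ⟨?_, ?_⟩, ?_, ?_⟩
  · intro h
    exact key_xy_not_mem (Ideal.Quotient.eq_zero_iff_mem.mp h)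
  · simp only [phiU, AlgHom.toRingHom_eq_coe, RingHom.coe_coe, map_pow, aeval_X,
      Matrix.cons_val_zero]
    exact Ideal.subset_span rfl
  · simp only [phiU, JU, AlgHom.toRingHom_eq_coe, RingHom.coe_coe, map_pow, aeval_X,
      Matrix.cons_val_one, Matrix.head_cons, Matrix.cons_val_zero]
    rw [Ideal.mem_span_singleton]
    exact ⟨X 1 ^ 2, by ring⟩
  · simp only [phiV, JV, AlgHom.toRingHom_eq_coe, RingHom.coe_coe, map_pow, aeval_X,
      Matrix.cons_val_zero]
    rw [Ideal.mem_span_singleton]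
    exact ⟨X 1 ^ 2, by ring⟩
  · simp only [phiV, AlgHom.toRingHom_eq_coe, RingHom.coe_coe, map_pow, aeval_X,
      Matrix.cons_val_one, Matrix.head_cons]
    exact Ideal.subset_span rfl
  · simp only [phiU, JU, AlgHom.toRingHom_eq_coe, RingHom.coe_coe, map_mul, aeval_X,
      Matrix.cons_val_zero, Matrix.cons_val_one, Matrix.head_cons]
    rw [Ideal.mem_span_singleton]
    exact ⟨X 1, by ring⟩
  · simp only [phiV, JV, AlgHom.toRingHom_eq_coe, RingHom.coe_coe, map_mul, aeval_X,
      Matrix.cons_val_zero, Matrix.cons_val_one, Matrix.head_cons]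
    rw [Ideal.mem_span_singleton]
    exact ⟨X 1, by ring⟩

end
end
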